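/- Let C be a real symmetric positive definite 2N×2N matrix. Then both I_{2N} + Γ(C) and I_{2N} − Γ(C) are positive definite; equivalently, every eigenvalue of Γ(C) lies in the open interval (−1, 1). -/

import Mathlib

open Matrix Polynomial

/-- The proper part `Ċ` of a real `2N × 2N` matrix `C` with blocks `[[A, B],[B′, D]]`:
`Ċ = (1/2)·[[A+D, B−B′],[B′−B, A+D]]`. -/
noncomputable def dotPart {N : ℕ} (C : Matrix (Fin N ⊕ Fin N) (Fin N ⊕ Fin N) ℝ) :
    Matrix (Fin N ⊕ Fin N) (Fin N ⊕ Fin N) ℝ :=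
  (1/2 : ℝ) • Matrix.fromBlocks (C.toBlocks₁₁ + C.toBlocks₂₂) (C.toBlocks₁₂ - C.toBlocks₂₁)
    (C.toBlocks₂₁ - C.toBlocks₁₂) (C.toBlocks₁₁ + C.toBlocks₂₂)

/-- The improper part `C̈ = C − Ċ`. -/
noncomputable def ddotPart {N : ℕ} (C : Matrix (Fin N ⊕ Fin N) (Fin N ⊕ Fin N) ℝ) :
    Matrix (Fin N ⊕ Fin N) (Fin N ⊕ Fin N) ℝ :=
  C - dotPart C

/-- `Γ(C) = Ċ^{-1/2} C̈ Ċ^{-1/2}`, where `Ċ^{1/2}` is the (unique) positive semidefinite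
(hence, as `Ċ` is positive definite, the unique symmetric positive definite) square root
of `Ċ`, given a proof `h` that `Ċ` is positive definite. -/
noncomputable def Gamma {N : ℕ} (C : Matrix (Fin N ⊕ Fin N) (Fin N ⊕ Fin N) ℝ)
    (h : (dotPart C).PosDef) : Matrix (Fin N ⊕ Fin N) (Fin N ⊕ Fin N) ℝ :=
  ((h.posSemidef.1.eigenvectorUnitary : Matrix (Fin N ⊕ Fin N) (Fin N ⊕ Fin N) ℝ) *
      diagonal ((RCLike.ofReal : ℝ → ℝ) ∘ (√·) ∘ h.posSemidef.1.eigenvalues) *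
      (star h.posSemidef.1.eigenvectorUnitary : Matrix (Fin N ⊕ Fin N) (Fin N ⊕ Fin N) ℝ))⁻¹ *
    ddotPart C *
    ((h.posSemidef.1.eigenvectorUnitary : Matrix (Fin N ⊕ Fin N) (Fin N ⊕ Fin N) ℝ) *
      diagonal ((RCLike.ofReal : ℝ → ℝ) ∘ (√·) ∘ h.posSemidef.1.eigenvalues) *
      (star h.posSemidef.1.eigenvectorUnitary : Matrix (Fin N ⊕ Fin N) (Fin N ⊕ Fin N) ℝ))⁻¹


lemma conj_posdef {n : Type*} [Fintype n] [DecidableEq n] {A B : Matrix n n ℝ}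
    (hA : A.PosDef) (hB : IsUnit B) : (Bᴴ * A * B).PosDef := by
  exact hA.conjTranspose_mul_mul_same (Matrix.mulVec_injective_iff_isUnit.mpr hB)


noncomputable def matJ (N : ℕ) : Matrix (Fin N ⊕ Fin N) (Fin N ⊕ Fin N) ℝ :=
  Matrix.fromBlocks 0 (-1) 1 0

lemma matJ_conjT (N : ℕ) : (matJ N)ᴴ = Matrix.fromBlocks 0 1 (-1) 0 := by
  rw [matJ, fromBlocks_conjTranspose]; simp

lemma matJ_mul_conjT (N : ℕ) : matJ N * (matJ N)ᴴ = 1 := by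
  rw [matJ_conjT, matJ, fromBlocks_multiply, ← fromBlocks_one]
  simp

lemma key_eq {N : ℕ} (C : Matrix (Fin N ⊕ Fin N) (Fin N ⊕ Fin N) ℝ) :
    (2 : ℝ) • dotPart C - C = matJ N * C * (matJ N)ᴴ := by
  obtain ⟨A, B, B', D, rfl⟩ : ∃ A B B' D, C = fromBlocks A B B' D :=
    ⟨_, _, _, _, (fromBlocks_toBlocks C).symm⟩
  rw [matJ_conjT, matJ, dotPart, fromBlocks_multiply, fromBlocks_multiply, smul_smul]
  simp only [toBlocks_fromBlocks₁₁, toBlocks_fromBlocks₁₂, toBlocks_fromBlocks₂₁,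
    toBlocks_fromBlocks₂₂]
  norm_num
  rw [sub_eq_add_neg, fromBlocks_neg, fromBlocks_add, fromBlocks_inj]
  refine ⟨by abel, by abel, by abel, by abel⟩

theorem statement5 (N : ℕ) (hN : 1 ≤ N) (C : Matrix (Fin N ⊕ Fin N) (Fin N ⊕ Fin N) ℝ)
    (hC : C.PosDef) (hd : (dotPart C).PosDef) :
    (1 + Gamma C hd).PosDef ∧ (1 - Gamma C hd).PosDef := by
  set U : Matrix (Fin N ⊕ Fin N) (Fin N ⊕ Fin N) ℝ :=
    (hd.posSemidef.1.eigenvectorUnitary : Matrix (Fin N ⊕ Fin N) (Fin N ⊕ Fin N) ℝ) with hUdef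
  set S := U * diagonal ((RCLike.ofReal : ℝ → ℝ) ∘ (√·) ∘ hd.posSemidef.1.eigenvalues) *
      (star hd.posSemidef.1.eigenvectorUnitary : Matrix (Fin N ⊕ Fin N) (Fin N ⊕ Fin N) ℝ)
    with hSdef
  have hS : S.IsHermitian := by
    rw [hSdef, star_eq_conjTranspose]
    exact isHermitian_mul_mul_conjTranspose U (isHermitian_diagonal _)
  have hSS : S * S = dotPart C := by
    have hUU : (star hd.posSemidef.1.eigenvectorUnitary : Matrix (Fin N ⊕ Fin N) (Fin N ⊕ Fin N) ℝ)
        * U = 1 := Unitary.coe_star_mul_self _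
    have hD : diagonal ((RCLike.ofReal : ℝ → ℝ) ∘ (√·) ∘ hd.posSemidef.1.eigenvalues) *
        diagonal ((RCLike.ofReal : ℝ → ℝ) ∘ (√·) ∘ hd.posSemidef.1.eigenvalues) =
        diagonal ((RCLike.ofReal : ℝ → ℝ) ∘ hd.posSemidef.1.eigenvalues) := by
      rw [diagonal_mul_diagonal]
      congr 1; funext i
      simp only [Function.comp_apply, RCLike.ofReal_real_eq_id, id]
      exact Real.mul_self_sqrt (hd.posSemidef.eigenvalues_nonneg i)
    rw [hSdef, show ∀ a b c d e f : Matrix (Fin N ⊕ Fin N) (Fin N ⊕ Fin N) ℝ,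
      a * b * c * (d * e * f) = a * b * (c * d) * e * f from fun _ _ _ _ _ _ => by
        simp only [mul_assoc], hUU, mul_one, mul_assoc U, hD]
    conv_rhs => rw [hd.posSemidef.1.spectral_theorem, Unitary.conjStarAlgAut_apply]
  have hdet : IsUnit S.det := by
    have h1 : S.det * S.det = (dotPart C).det := by rw [← det_mul, hSS]
    have h2 : (0:ℝ) < (dotPart C).det := hd.det_pos
    refine isUnit_iff_ne_zero.mpr fun h => ?_
    rw [h, mul_zero] at h1; exact h2.ne' h1.symm
  have hU : IsUnit S := (Matrix.isUnit_iff_isUnit_det S).mpr hdet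
  have hUinv : IsUnit S⁻¹ :=
    ⟨⟨S⁻¹, S, Matrix.nonsing_inv_mul S hdet, Matrix.mul_nonsing_inv S hdet⟩, rfl⟩
  have hinvH : (S⁻¹).IsHermitian := hS.inv
  have hone : S⁻¹ * dotPart C * S⁻¹ = 1 := by
    rw [← hSS, ← mul_assoc, Matrix.nonsing_inv_mul S hdet, one_mul,
      Matrix.mul_nonsing_inv S hdet]
  have hGamma : Gamma C hd = S⁻¹ * C * S⁻¹ - 1 := by
    rw [Gamma, ← hSdef, ddotPart, Matrix.mul_sub, Matrix.sub_mul, hone]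
  have hJU : IsUnit ((matJ N)ᴴ) :=
    ⟨⟨(matJ N)ᴴ, matJ N, mul_eq_one_comm.mp (matJ_mul_conjT N), matJ_mul_conjT N⟩, rfl⟩
  constructor
  · have h1 : 1 + Gamma C hd = (S⁻¹)ᴴ * C * S⁻¹ := by
      rw [hGamma, add_sub_cancel, hinvH.eq]
    rw [h1]
    exact conj_posdef hC hUinv
  · have h2 : 1 - Gamma C hd = (S⁻¹)ᴴ * (matJ N * C * (matJ N)ᴴ) * S⁻¹ := by
      rw [hGamma, hinvH.eq, ← key_eq, Matrix.mul_sub, Matrix.sub_mul, Matrix.mul_smul,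
        Matrix.smul_mul, hone, two_smul]
      abel
    rw [h2]
    have hmid : (matJ N * C * (matJ N)ᴴ).PosDef := by
      have := conj_posdef hC hJU
      rwa [conjTranspose_conjTranspose] at this
    exact conj_posdef hmid hUinv
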